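/- Let X be a real linear space, Y a real Banach space, and r, s, t positive integers. Under the hypotheses of the generalized Jensen stability theorem (f(0)=g(0)=h(0)=0, ‖r·f((s·x+t·y)/r) − s·g(x) − t·h(y)‖ ≤ φ(x,y) with φ̃ < ∞), the unique additive map T satisfying ‖f(x) − T(x)‖ ≤ φ̃(x,x) also satisfies ‖g(x) − T(x)‖ ≤ (1/s)·φ(x, 0) + (r/s)·φ̃((s/r)x, (s/r)x) for all x ∈ X. -/

import Mathlib

theorem stmt_1 {X Y : Type*} [AddCommGroup X] [Module ℝ X]
    [NormedAddCommGroup Y] [NormedSpace ℝ Y] [CompleteSpace Y]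
    (r s t : ℕ) (hr : 0 < r) (hs : 0 < s) (ht : 0 < t)
    (f g h : X → Y) (φ : X → X → ℝ) (hφ : ∀ x y, 0 ≤ φ x y)
    (hf0 : f 0 = 0) (hg0 : g 0 = 0) (hh0 : h 0 = 0)
    (hsum : ∀ x y : X, Summable (fun n : ℕ =>
      (1 / 2 ^ n : ℝ) * (φ ((2 ^ n * ((r : ℝ) / s)) • x) ((2 ^ n * ((r : ℝ) / t)) • y)
        + φ ((2 ^ n * ((r : ℝ) / s)) • x) 0 + φ 0 ((2 ^ n * ((r : ℝ) / t)) • y))))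
    (hineq : ∀ x y : X,
      ‖(r : ℝ) • f (((r : ℝ)⁻¹) • ((s : ℝ) • x + (t : ℝ) • y)) - (s : ℝ) • g x - (t : ℝ) • h y‖
        ≤ φ x y)
    (T : X → Y) (hTadd : ∀ x y : X, T (x + y) = T x + T y)
    (hfT : ∀ x : X, ‖f x - T x‖ ≤ (1 / (2 * r) : ℝ) * ∑' n : ℕ,
      (1 / 2 ^ n : ℝ) * (φ ((2 ^ n * ((r : ℝ) / s)) • x) ((2 ^ n * ((r : ℝ) / t)) • x)
        + φ ((2 ^ n * ((r : ℝ) / s)) • x) 0 + φ 0 ((2 ^ n * ((r : ℝ) / t)) • x))) :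
    ∀ x : X, ‖g x - T x‖ ≤ (1 / s : ℝ) * φ x 0 + ((r : ℝ) / s) *
      ((1 / (2 * r) : ℝ) * ∑' n : ℕ,
        (1 / 2 ^ n : ℝ) * (φ ((2 ^ n * ((r : ℝ) / s)) • (((s : ℝ) / r) • x))
              ((2 ^ n * ((r : ℝ) / t)) • (((s : ℝ) / r) • x))
          + φ ((2 ^ n * ((r : ℝ) / s)) • (((s : ℝ) / r) • x)) 0
          + φ 0 ((2 ^ n * ((r : ℝ) / t)) • (((s : ℝ) / r) • x)))) := by
  intro x
  have hr0 : (r : ℝ) ≠ 0 := Nat.cast_ne_zero.mpr hr.ne'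
  have hs0 : (s : ℝ) ≠ 0 := Nat.cast_ne_zero.mpr hs.ne'
  set v : X := ((s : ℝ) / r) • x with hv
  have hT0 : T 0 = 0 := by
    have := hTadd 0 0
    simp only [add_zero] at this
    exact left_eq_add.mp this
  have hTn : ∀ (n : ℕ) (y : X), T (n • y) = n • T y := by
    intro n y
    induction n with
    | zero => simpa using hT0
    | succ k ih => rw [succ_nsmul, succ_nsmul, hTadd, ih]
  set u : X := ((r : ℝ)⁻¹) • x with hu
  have hxu : x = r • u := by
    rw [hu, ← Nat.cast_smul_eq_nsmul ℝ, smul_smul, mul_inv_cancel₀ hr0, one_smul]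
  have hvu : v = s • u := by
    rw [hv, hu, ← Nat.cast_smul_eq_nsmul ℝ, smul_smul, div_eq_mul_inv]
  have hTx : T x = (r : ℝ) • T u := by
    rw [hxu, hTn, Nat.cast_smul_eq_nsmul]
  have hTv : T v = (s : ℝ) • T u := by
    rw [hvu, hTn, Nat.cast_smul_eq_nsmul]
  -- bound from hineq at (x, 0)
  have h1 : ‖(r : ℝ) • f v - (s : ℝ) • g x‖ ≤ φ x 0 := by
    have := hineq x 0
    simpa [hh0, smul_zero, add_zero, smul_smul, hv, div_eq_mul_inv, mul_comm] using this
  -- decomposition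
  have key : g x - T x = ((1 : ℝ)/s) • ((s : ℝ) • g x - (r : ℝ) • f v)
      + ((r : ℝ)/s) • (f v - T v) := by
    rw [hTx, hTv]
    match_scalars <;> field_simp <;> ring
  rw [key]
  have h2 := hfT v
  calc ‖((1 : ℝ)/s) • ((s : ℝ) • g x - (r : ℝ) • f v) + ((r : ℝ)/s) • (f v - T v)‖
      ≤ ‖((1 : ℝ)/s) • ((s : ℝ) • g x - (r : ℝ) • f v)‖ + ‖((r : ℝ)/s) • (f v - T v)‖ :=
        norm_add_le _ _
    _ = (1/s : ℝ) * ‖(s : ℝ) • g x - (r : ℝ) • f v‖ + ((r : ℝ)/s) * ‖f v - T v‖ := by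
        rw [norm_smul, norm_smul, Real.norm_eq_abs, Real.norm_eq_abs,
          abs_of_nonneg (by positivity), abs_of_nonneg (by positivity)]
    _ ≤ (1/s : ℝ) * φ x 0 + ((r : ℝ)/s) * ((1 / (2 * r) : ℝ) * ∑' n : ℕ,
        (1 / 2 ^ n : ℝ) * (φ ((2 ^ n * ((r : ℝ) / s)) • v) ((2 ^ n * ((r : ℝ) / t)) • v)
          + φ ((2 ^ n * ((r : ℝ) / s)) • v) 0 + φ 0 ((2 ^ n * ((r : ℝ) / t)) • v))) := by
        gcongr
        · rw [norm_sub_rev]; exact h1
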